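/- Let q ∈ (0,1), let J ≥ 1, and let μ₁, …, μ_J be real numbers, all nonzero. Define w(μ; λ) = (2/q) · Φ(−arcosh(λ · exp(μ²/2)/q) / |μ|), m = min_i {μ_i²/2}, and H(λ) = Σ_{i=1}^J w(μ_i; λ). If H(q·exp(−m)) ≥ J, then there exists a unique λ ≥ q·exp(−m) with H(λ) = J, and the weights w_i = w(μ_i; λ) satisfy 0 ≤ w_i ≤ 1/q, Σ_{i=1}^J w_i = J, and maximize the objective Σ_{i=1}^J [Φ(Φ⁻¹(q v_i/2) − μ_i) + Φ(Φ⁻¹(q v_i/2) + μ_i)] over all vectors v ∈ [0, 1/q]^J with Σ_{i=1}^J v_i = J. -/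

import Mathlib

open MeasureTheory Set Filter
open Real hiding arcosh arcosh_nonneg cosh_arcosh continuousOn_arcosh

/-- The standard normal cumulative distribution function. -/
noncomputable def Phi (x : ℝ) : ℝ :=
  ∫ t in Set.Iic x, (Real.sqrt (2 * Real.pi))⁻¹ * Real.exp (-t ^ 2 / 2)

noncomputable def gauss (t : ℝ) : ℝ := (Real.sqrt (2 * Real.pi))⁻¹ * Real.exp (-t ^ 2 / 2)

lemma Phi_def (x : ℝ) : Phi x = ∫ t in Set.Iic x, gauss t := rfl

lemma gauss_pos (t : ℝ) : 0 < gauss t := by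
  have : (0:ℝ) < Real.sqrt (2 * Real.pi) := Real.sqrt_pos.2 (by positivity)
  exact mul_pos (inv_pos.2 this) (Real.exp_pos _)

lemma gauss_eq (t : ℝ) : gauss t = (Real.sqrt (2 * Real.pi))⁻¹ * Real.exp (-(1/2) * t ^ 2) := by
  unfold gauss; ring_nf

lemma integrable_gauss : Integrable gauss := by
  have h := integrable_exp_neg_mul_sq (by norm_num : (0:ℝ) < 1/2)
  have := h.const_mul (Real.sqrt (2 * Real.pi))⁻¹
  refine this.congr ?_
  filter_upwards with t
  rw [gauss_eq]

lemma continuous_gauss : Continuous gauss := by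
  unfold gauss; continuity

lemma integral_gauss_total : ∫ t, gauss t = 1 := by
  have h : ∫ t : ℝ, Real.exp (-(1/2:ℝ) * t ^ 2) = Real.sqrt (Real.pi / (1/2)) :=
    integral_gaussian (1/2)
  have : ∫ t, gauss t = (Real.sqrt (2 * Real.pi))⁻¹ * Real.sqrt (Real.pi / (1/2)) := by
    rw [← h, ← integral_const_mul]
    congr 1; ext t; rw [gauss_eq]
  rw [this]
  rw [show Real.pi / (1/2:ℝ) = 2 * Real.pi by ring]
  rw [inv_mul_cancel₀ (by positivity)]

lemma Phi_sub_Phi {a b : ℝ} : Phi b - Phi a = ∫ t in a..b, gauss t := by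
  simp_rw [Phi_def]
  exact intervalIntegral.integral_Iic_sub_Iic (integrable_gauss.integrableOn)
    (integrable_gauss.integrableOn)

lemma Phi_strictMono : StrictMono Phi := by
  intro a b hab
  have h : 0 < ∫ t in a..b, gauss t := by
    apply intervalIntegral.intervalIntegral_pos_of_pos_on
    · exact integrable_gauss.intervalIntegrable
    · intro t _; exact gauss_pos t
    · exact hab
  have := Phi_sub_Phi (a := a) (b := b)
  linarith

lemma Phi_hasDerivAt (x : ℝ) : HasDerivAt Phi (gauss x) x := by
  have h : ∀ y, Phi y = Phi 0 + ∫ t in (0:ℝ)..y, gauss t := by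
    intro y; have := Phi_sub_Phi (a := (0:ℝ)) (b := y); linarith
  have hd : HasDerivAt (fun y => Phi 0 + ∫ t in (0:ℝ)..y, gauss t) (gauss x) x := by
    apply HasDerivAt.const_add
    exact intervalIntegral.integral_hasDerivAt_right integrable_gauss.intervalIntegrable
      (continuous_gauss.stronglyMeasurableAtFilter _ _)
      continuous_gauss.continuousAt
  exact hd.congr_of_eventuallyEq (Filter.Eventually.of_forall h)

lemma Phi_tendsto_atTop : Tendsto Phi atTop (nhds 1) := by
  have h : Tendsto (fun x => ∫ t in (0:ℝ)..x, gauss t) atTop (nhds (∫ t in Set.Ioi (0:ℝ), gauss t)) :=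
    intervalIntegral_tendsto_integral_Ioi 0 integrable_gauss.integrableOn tendsto_id
  have h2 : Tendsto (fun x => Phi 0 + ∫ t in (0:ℝ)..x, gauss t) atTop
      (nhds (Phi 0 + ∫ t in Set.Ioi (0:ℝ), gauss t)) := tendsto_const_nhds.add h
  have h3 : Phi 0 + ∫ t in Set.Ioi (0:ℝ), gauss t = 1 := by
    rw [← integral_gauss_total]
    exact intervalIntegral.integral_Iic_add_Ioi integrable_gauss.integrableOn
      integrable_gauss.integrableOn
  rw [← h3]
  refine h2.congr fun x => ?_
  have := Phi_sub_Phi (a := (0:ℝ)) (b := x); linarith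

lemma Phi_tendsto_atBot : Tendsto Phi atBot (nhds 0) := by
  have h : Tendsto (fun x => ∫ t in x..(0:ℝ), gauss t) atBot (nhds (Phi 0)) :=
    intervalIntegral_tendsto_integral_Iic 0 integrable_gauss.integrableOn tendsto_id
  have h2 : Tendsto (fun x => Phi 0 - ∫ t in x..(0:ℝ), gauss t) atBot (nhds (Phi 0 - Phi 0)) :=
    tendsto_const_nhds.sub h
  rw [sub_self] at h2
  refine h2.congr fun x => ?_
  have := Phi_sub_Phi (a := x) (b := (0:ℝ)); linarith

lemma Phi_nonneg (x : ℝ) : 0 ≤ Phi x := by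
  rw [Phi_def]
  exact MeasureTheory.setIntegral_nonneg measurableSet_Iic fun t _ => (gauss_pos t).le

lemma Phi_pos (x : ℝ) : 0 < Phi x := by
  have h : Phi (x-1) < Phi x := Phi_strictMono (by linarith)
  exact lt_of_le_of_lt (Phi_nonneg (x-1)) h

lemma Phi_add_Ioi (x : ℝ) : Phi x + ∫ t in Set.Ioi x, gauss t = 1 := by
  rw [← integral_gauss_total]
  exact intervalIntegral.integral_Iic_add_Ioi integrable_gauss.integrableOn
    integrable_gauss.integrableOn

lemma Phi_le_one (x : ℝ) : Phi x ≤ 1 := by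
  have h := Phi_add_Ioi x
  have h2 : 0 ≤ ∫ t in Set.Ioi x, gauss t :=
    MeasureTheory.setIntegral_nonneg measurableSet_Ioi fun t _ => (gauss_pos t).le
  linarith

lemma Phi_lt_one (x : ℝ) : Phi x < 1 :=
  lt_of_lt_of_le (Phi_strictMono (by linarith : x < x+1)) (Phi_le_one (x+1))

lemma Phi_continuous : Continuous Phi :=
  continuous_iff_continuousAt.2 fun x => (Phi_hasDerivAt x).continuousAt

lemma gauss_neg (t : ℝ) : gauss (-t) = gauss t := by unfold gauss; ring_nf

lemma Phi_zero : Phi 0 = 1/2 := by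
  have key : Phi 0 = ∫ t in Set.Ioi (0:ℝ), gauss t := by
    rw [Phi_def]
    have := integral_comp_neg_Iic (0:ℝ) gauss
    simp only [neg_zero] at this
    rw [← this]
    simp_rw [gauss_neg]
  have h := Phi_add_Ioi 0
  rw [← key] at h; linarith

lemma Phi_surj_Ioo {u : ℝ} (hu : u ∈ Set.Ioo (0:ℝ) 1) : ∃ x, Phi x = u := by
  obtain ⟨a, ha⟩ : ∃ a, Phi a < u := by
    have := Phi_tendsto_atBot.eventually_lt_const hu.1
    exact this.exists
  obtain ⟨b, hb⟩ : ∃ b, u < Phi b := by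
    have := Phi_tendsto_atTop.eventually_const_lt hu.2
    exact this.exists
  have hab : a ≤ b := by
    by_contra h
    exact absurd (Phi_strictMono (lt_of_not_ge h)) (by linarith)
  have := intermediate_value_Icc hab Phi_continuous.continuousOn
  obtain ⟨x, _, hx⟩ := this ⟨ha.le, hb.le⟩
  exact ⟨x, hx⟩

/-- The inverse of the standard normal CDF, mapping (0,1) onto ℝ. -/
noncomputable def PhiInv : ℝ → ℝ := Function.invFun Phi

lemma Phi_PhiInv {u : ℝ} (hu : u ∈ Set.Ioo (0:ℝ) 1) : Phi (PhiInv u) = u :=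
  Function.invFun_eq (Phi_surj_Ioo hu)

lemma PhiInv_Phi (x : ℝ) : PhiInv (Phi x) = x :=
  Function.leftInverse_invFun Phi_strictMono.injective x

/-- The inverse hyperbolic cosine, defined on `[1, ∞)`. -/
noncomputable def arcosh (x : ℝ) : ℝ := Real.log (x + Real.sqrt (x ^ 2 - 1))

lemma sqrt_lt_self_of_one_le {x : ℝ} (hx : 1 ≤ x) : Real.sqrt (x ^ 2 - 1) < x := by
  have h0 : 0 < x := by linarith
  have : x ^ 2 - 1 < x ^ 2 := by linarith
  calc Real.sqrt (x ^ 2 - 1) < Real.sqrt (x ^ 2) := by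
        apply Real.sqrt_lt_sqrt (by nlinarith) this
    _ = x := by rw [Real.sqrt_sq h0.le]

lemma arcosh_pos_arg {x : ℝ} (hx : 1 ≤ x) : 0 < x + Real.sqrt (x ^ 2 - 1) := by
  have := Real.sqrt_nonneg (x ^ 2 - 1); linarith

lemma one_le_arg {x : ℝ} (hx : 1 ≤ x) : 1 ≤ x + Real.sqrt (x ^ 2 - 1) := by
  have := Real.sqrt_nonneg (x ^ 2 - 1); linarith

lemma arcosh_nonneg {x : ℝ} (hx : 1 ≤ x) : 0 ≤ arcosh x :=
  Real.log_nonneg (one_le_arg hx)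

lemma cosh_arcosh {x : ℝ} (hx : 1 ≤ x) : Real.cosh (arcosh x) = x := by
  have hpos := arcosh_pos_arg hx
  have hs : Real.sqrt (x ^ 2 - 1) ^ 2 = x ^ 2 - 1 := Real.sq_sqrt (by nlinarith)
  rw [arcosh, Real.cosh_eq, Real.exp_log hpos, ← Real.log_inv, Real.exp_log (by positivity)]
  have hinv : (x + Real.sqrt (x ^ 2 - 1))⁻¹ = x - Real.sqrt (x ^ 2 - 1) := by
    apply inv_eq_of_mul_eq_one_right
    nlinarith [hs]
  rw [hinv]; ring

lemma arcosh_one : arcosh 1 = 0 := by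
  rw [arcosh]; norm_num

lemma arcosh_lt_arcosh {a b : ℝ} (ha : 1 ≤ a) (hab : a < b) : arcosh a < arcosh b := by
  by_contra h
  push_neg at h
  have h2 : Real.cosh (arcosh b) ≤ Real.cosh (arcosh a) := Real.cosh_le_cosh.2 (by
    rw [abs_of_nonneg (arcosh_nonneg (by linarith : (1:ℝ) ≤ b)),
        abs_of_nonneg (arcosh_nonneg ha)]
    exact h)
  rw [cosh_arcosh (by linarith), cosh_arcosh ha] at h2
  linarith

lemma arcosh_le_arcosh {a b : ℝ} (ha : 1 ≤ a) (hab : a ≤ b) : arcosh a ≤ arcosh b := by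
  rcases eq_or_lt_of_le hab with rfl | h
  · exact le_refl _
  · exact (arcosh_lt_arcosh ha h).le

lemma continuousOn_arcosh : ContinuousOn arcosh (Set.Ici 1) := by
  apply Real.continuousOn_log.comp
  · exact (continuousOn_id.add ((continuousOn_id.pow 2).sub continuousOn_const).sqrt)
  · intro x hx
    exact ne_of_gt (arcosh_pos_arg hx)

lemma arcosh_tendsto_atTop : Tendsto arcosh atTop atTop := by
  apply tendsto_atTop_mono' _ _ Real.tendsto_log_atTop
  filter_upwards [eventually_ge_atTop (1:ℝ)] with x hx
  exact Real.log_le_log (by linarith) (by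
    have := Real.sqrt_nonneg (x ^ 2 - 1); linarith)

section G
variable (q lam μ : ℝ)

/-- The auxiliary function whose max over `Iic 0` is attained at `ζ`. -/
noncomputable def Gfun (x : ℝ) : ℝ := Phi (x - μ) + Phi (x + μ) - 2 * lam / q * Phi x

lemma gauss_shift (x a : ℝ) : gauss (x - a) + gauss (x + a) =
    2 * gauss x * Real.exp (-a ^ 2 / 2) * Real.cosh (a * x) := by
  unfold gauss
  rw [Real.cosh_eq]
  rw [show (-(x - a) ^ 2 / 2 : ℝ) = -x^2/2 + (-a^2/2 + (a*x)) by ring,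
      show (-(x + a) ^ 2 / 2 : ℝ) = -x^2/2 + (-a^2/2 + (-(a*x))) by ring,
      Real.exp_add, Real.exp_add, Real.exp_add, Real.exp_add]
  ring

lemma Gfun_hasDerivAt (x : ℝ) : HasDerivAt (Gfun q lam μ)
    (2 * gauss x * Real.exp (-μ ^ 2 / 2) * (Real.cosh (μ * x) - lam * Real.exp (μ ^ 2 / 2) / q)) x := by
  have h1 : HasDerivAt (fun x => Phi (x - μ)) (gauss (x - μ)) x := by
    have := (Phi_hasDerivAt (x - μ)).comp x ((hasDerivAt_id x).sub_const μ)
    exact this.congr_deriv (mul_one _)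
  have h2 : HasDerivAt (fun x => Phi (x + μ)) (gauss (x + μ)) x := by
    have := (Phi_hasDerivAt (x + μ)).comp x ((hasDerivAt_id x).add_const μ)
    exact this.congr_deriv (mul_one _)
  have h3 : HasDerivAt (fun x => 2 * lam / q * Phi x) (2 * lam / q * gauss x) x :=
    (Phi_hasDerivAt x).const_mul _
  have := (h1.add h2).sub h3
  refine HasDerivAt.congr_deriv (f := Gfun q lam μ) this ?_
  symm
  rw [gauss_shift]
  have hE : Real.exp (μ ^ 2 / 2) = (Real.exp (-μ ^ 2 / 2))⁻¹ := by
    rw [← Real.exp_neg]; ring_nf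
  rw [hE]
  have hne : Real.exp (-μ ^ 2 / 2) ≠ 0 := (Real.exp_pos _).ne'
  have hcancel : Real.exp (μ ^ 2 * (-1/2)) * (Real.exp (μ ^ 2 * (-1/2)))⁻¹ = 1 :=
    mul_inv_cancel₀ (Real.exp_pos _).ne'
  field_simp
end G

section Gmax
variable {q lam μ : ℝ} (hq : 0 < q) (hμ : μ ≠ 0)

/-- `c = lam e^{μ²/2}/q`, `ζ = -arcosh c / |μ|`. -/
lemma zeta_nonpos (hc : 1 ≤ lam * Real.exp (μ^2/2) / q) :
    -arcosh (lam * Real.exp (μ^2/2) / q) / |μ| ≤ 0 := by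
  apply div_nonpos_of_nonpos_of_nonneg
  · simpa using arcosh_nonneg hc
  · exact abs_nonneg μ

lemma cosh_ge_iff (hμ : μ ≠ 0) (hc : 1 ≤ lam * Real.exp (μ^2/2) / q) {z : ℝ} (hz : z ≤ 0) :
    (lam * Real.exp (μ^2/2) / q ≤ Real.cosh (μ * z) ↔
      z ≤ -arcosh (lam * Real.exp (μ^2/2) / q) / |μ|) := by
  set c := lam * Real.exp (μ^2/2) / q
  have habs : 0 < |μ| := abs_pos.2 hμ
  have h1 : (c ≤ Real.cosh (μ*z)) ↔ arcosh c ≤ |μ| * (-z) := by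
    conv_lhs => rw [← cosh_arcosh hc]
    rw [Real.cosh_le_cosh, abs_of_nonneg (arcosh_nonneg hc), abs_mul, abs_of_nonpos hz]
  rw [h1, le_div_iff₀ habs]
  constructor <;> intro h <;> nlinarith

lemma Gfun_le_zeta (hμ : μ ≠ 0) (hc : 1 ≤ lam * Real.exp (μ^2/2) / q) {z : ℝ} (hz : z ≤ 0) :
    Gfun q lam μ z ≤ Gfun q lam μ (-arcosh (lam * Real.exp (μ^2/2) / q) / |μ|) := by
  set c := lam * Real.exp (μ^2/2) / q with hcdef
  set ζ := -arcosh c / |μ| with hζ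
  have hζ0 : ζ ≤ 0 := zeta_nonpos hc
  have hdiff : ∀ x, HasDerivAt (Gfun q lam μ)
      (2 * gauss x * Real.exp (-μ ^ 2 / 2) * (Real.cosh (μ * x) - c)) x := by
    intro x; exact Gfun_hasDerivAt q lam μ x
  have hcont : Continuous (Gfun q lam μ) :=
    continuous_iff_continuousAt.2 fun x => (hdiff x).continuousAt
  have hderiv : ∀ x, deriv (Gfun q lam μ) x
      = 2 * gauss x * Real.exp (-μ ^ 2 / 2) * (Real.cosh (μ * x) - c) :=
    fun x => (hdiff x).deriv
  rcases le_or_gt z ζ with h | h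
  · -- monotone on Iic ζ
    have hmono : MonotoneOn (Gfun q lam μ) (Set.Iic ζ) := by
      apply monotoneOn_of_deriv_nonneg (convex_Iic ζ) hcont.continuousOn
      · intro x _
        exact (hdiff x).differentiableAt.differentiableWithinAt
      · intro x hx
        rw [interior_Iic] at hx
        rw [hderiv]
        have hx0 : x ≤ 0 := le_trans hx.le hζ0
        have hle : c ≤ Real.cosh (μ * x) := (cosh_ge_iff hμ hc hx0).2 hx.le
        have := mul_nonneg (mul_nonneg (by linarith [gauss_pos x] : (0:ℝ) ≤ 2 * gauss x)
          (Real.exp_pos (-μ ^ 2 / 2)).le) (sub_nonneg.2 hle)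
        linarith
    exact hmono h (le_refl ζ : ζ ∈ Set.Iic ζ) h
  · -- antitone on Icc ζ 0
    have hanti : AntitoneOn (Gfun q lam μ) (Set.Icc ζ 0) := by
      apply antitoneOn_of_deriv_nonpos (convex_Icc ζ 0) hcont.continuousOn
      · intro x _
        exact (hdiff x).differentiableAt.differentiableWithinAt
      · intro x hx
        rw [interior_Icc] at hx
        rw [hderiv]
        have hx0 : x ≤ 0 := hx.2.le
        have hle : Real.cosh (μ * x) ≤ c := by
          by_contra hcon
          push_neg at hcon
          exact absurd ((cosh_ge_iff hμ hc hx0).1 hcon.le) (not_le.2 hx.1)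
        have := mul_nonneg (mul_nonneg (by linarith [gauss_pos x] : (0:ℝ) ≤ 2 * gauss x)
          (Real.exp_pos (-μ ^ 2 / 2)).le) (sub_nonneg.2 hle)
        nlinarith
    exact hanti ⟨le_refl ζ, hζ0⟩ ⟨h.le, hz⟩ h.le
end Gmax

section Gmax2
variable {q lam μ : ℝ}

lemma Gfun_tendsto_atBot : Tendsto (Gfun q lam μ) atBot (nhds 0) := by
  have h1 : Tendsto (fun z => Phi (z - μ)) atBot (nhds 0) :=
    Phi_tendsto_atBot.comp (tendsto_atBot_add_const_right _ (-μ) tendsto_id |>.congr (by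
      intro x; simp [sub_eq_add_neg]))
  have h2 : Tendsto (fun z => Phi (z + μ)) atBot (nhds 0) :=
    Phi_tendsto_atBot.comp (tendsto_atBot_add_const_right _ μ tendsto_id)
  have h3 : Tendsto (fun z => 2 * lam / q * Phi z) atBot (nhds (2 * lam / q * 0)) :=
    Phi_tendsto_atBot.const_mul _
  rw [mul_zero] at h3
  have := (h1.add h2).sub h3
  rw [add_zero, sub_zero] at this
  exact this

lemma Gfun_zeta_nonneg (hμ : μ ≠ 0) (hc : 1 ≤ lam * Real.exp (μ^2/2) / q) :
    0 ≤ Gfun q lam μ (-arcosh (lam * Real.exp (μ^2/2) / q) / |μ|) := by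
  have hmax : ∀ᶠ z in atBot, Gfun q lam μ z ≤
      Gfun q lam μ (-arcosh (lam * Real.exp (μ^2/2) / q) / |μ|) := by
    filter_upwards [eventually_le_atBot (0:ℝ)] with z hz
    exact Gfun_le_zeta hμ hc hz
  exact le_of_tendsto Gfun_tendsto_atBot hmax

end Gmax2

/-- The candidate optimal weight `w(μ; λ) = (2/q) Φ(−arcosh(λ exp(μ²/2)/q)/|μ|)`. -/
noncomputable def optWeight (q μ lam : ℝ) : ℝ :=
  2 / q * Phi (-arcosh (lam * Real.exp (μ ^ 2 / 2) / q) / |μ|)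

/-- The power of the level-`q v` two-sided Gaussian test at mean `μ`,
`Φ(Φ⁻¹(qv/2) − μ) + Φ(Φ⁻¹(qv/2) + μ)`, extended by continuity by `0` at `v = 0`. -/
noncomputable def twoSidedPower (q μ v : ℝ) : ℝ :=
  if v = 0 then 0 else Phi (PhiInv (q * v / 2) - μ) + Phi (PhiInv (q * v / 2) + μ)

section Key
variable {q lam μ : ℝ} (hq : 0 < q) (hq1 : q < 1) (hμ : μ ≠ 0)
  (hc : 1 ≤ lam * Real.exp (μ^2/2) / q)

include hq hμ hc in
lemma optWeight_mem : optWeight q μ lam ∈ Set.Icc (0:ℝ) (1/q) := by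
  set ζ := -arcosh (lam * Real.exp (μ^2/2) / q) / |μ| with hζ
  have hζ0 : ζ ≤ 0 := zeta_nonpos hc
  have h1 : Phi ζ ≤ 1/2 := by
    rw [← Phi_zero]
    exact Phi_strictMono.monotone hζ0
  have h2 : 0 < Phi ζ := Phi_pos ζ
  constructor
  · have : 0 < 2/q := by positivity
    unfold optWeight
    rw [← hζ]
    nlinarith
  · unfold optWeight
    rw [← hζ]
    rw [div_mul_eq_mul_div, div_le_div_iff₀ hq hq]
    nlinarith

include hq hμ hc in
lemma key_ineq {v : ℝ} (hv : v ∈ Set.Icc (0:ℝ) (1/q)) :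
    twoSidedPower q μ v - lam * v ≤
      twoSidedPower q μ (optWeight q μ lam) - lam * optWeight q μ lam := by
  set ζ := -arcosh (lam * Real.exp (μ^2/2) / q) / |μ| with hζ
  have hζ0 : ζ ≤ 0 := zeta_nonpos hc
  have hPζ : 0 < Phi ζ := Phi_pos ζ
  have hw : optWeight q μ lam = 2 / q * Phi ζ := rfl
  have hwpos : 0 < optWeight q μ lam := by
    rw [hw]; positivity
  have hqw : q * optWeight q μ lam / 2 = Phi ζ := by
    rw [hw]; field_simp
  have htspw : twoSidedPower q μ (optWeight q μ lam) = Phi (ζ - μ) + Phi (ζ + μ) := by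
    unfold twoSidedPower
    rw [if_neg hwpos.ne', hqw, PhiInv_Phi]
  have hRHS : twoSidedPower q μ (optWeight q μ lam) - lam * optWeight q μ lam
      = Gfun q lam μ ζ := by
    rw [htspw, hw]
    unfold Gfun
    ring
  rw [hRHS]
  rcases eq_or_lt_of_le hv.1 with h0 | h0
  · rw [← h0]
    unfold twoSidedPower
    rw [if_pos rfl]
    simpa using Gfun_zeta_nonneg hμ hc
  · -- v > 0
    have hu : q * v / 2 ∈ Set.Ioo (0:ℝ) 1 := by
      constructor
      · positivity
      · have h2 := hv.2
        have : q * v ≤ 1 := by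
          calc q * v ≤ q * (1/q) := by nlinarith
            _ = 1 := by field_simp
        linarith
    set z := PhiInv (q * v / 2) with hzdef
    have hPz : Phi z = q * v / 2 := Phi_PhiInv hu
    have hz0 : z ≤ 0 := by
      by_contra hcon
      push_neg at hcon
      have := Phi_strictMono hcon
      rw [hPz, Phi_zero] at this
      have : q * v ≤ 1 := by
        have h2 := hv.2
        calc q * v ≤ q * (1/q) := by nlinarith
          _ = 1 := by field_simp
      linarith
    have hLHS : twoSidedPower q μ v - lam * v = Gfun q lam μ z := by
      unfold twoSidedPower Gfun
      rw [if_neg h0.ne', ← hzdef, hPz]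
      field_simp
    rw [hLHS]
    exact Gfun_le_zeta hμ hc hz0
end Key

section Hlam
variable {q μ : ℝ} (hq : 0 < q) (hμ : μ ≠ 0)

include hq hμ in
lemma optWeight_strictAntiOn {a : ℝ} (ha : 1 ≤ a * Real.exp (μ^2/2) / q) :
    StrictAntiOn (fun lam => optWeight q μ lam) (Set.Ici a) := by
  intro l1 h1 l2 h2 h12
  have hE : 0 < Real.exp (μ^2/2) / q := by positivity
  have hc1 : 1 ≤ l1 * Real.exp (μ^2/2) / q := by
    calc (1:ℝ) ≤ a * Real.exp (μ^2/2) / q := ha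
      _ ≤ l1 * Real.exp (μ^2/2) / q := by
          rw [mul_div_assoc, mul_div_assoc]
          exact mul_le_mul_of_nonneg_right h1 hE.le
  have hcc : l1 * Real.exp (μ^2/2) / q < l2 * Real.exp (μ^2/2) / q := by
    rw [mul_div_assoc, mul_div_assoc]
    exact mul_lt_mul_of_pos_right h12 hE
  have harc : arcosh (l1 * Real.exp (μ^2/2) / q) < arcosh (l2 * Real.exp (μ^2/2) / q) :=
    arcosh_lt_arcosh hc1 hcc
  have habs : 0 < |μ| := abs_pos.2 hμ
  have hz : -arcosh (l2 * Real.exp (μ^2/2) / q) / |μ|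
      < -arcosh (l1 * Real.exp (μ^2/2) / q) / |μ| :=
    div_lt_div_of_pos_right (by linarith) habs
  have hPhi := Phi_strictMono hz
  have h2q : 0 < 2/q := by positivity
  show 2 / q * Phi (-arcosh (l2 * Real.exp (μ ^ 2 / 2) / q) / |μ|)
      < 2 / q * Phi (-arcosh (l1 * Real.exp (μ ^ 2 / 2) / q) / |μ|)
  have e1 : μ^2/2 = μ ^ 2 / 2 := rfl
  nlinarith [hPhi]
include hq hμ in
lemma optWeight_continuousOn {a : ℝ} (ha : 1 ≤ a * Real.exp (μ^2/2) / q) :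
    ContinuousOn (fun lam => optWeight q μ lam) (Set.Ici a) := by
  have hE : 0 < Real.exp (μ^2/2) / q := by positivity
  have hmap : Set.MapsTo (fun lam => lam * Real.exp (μ^2/2) / q) (Set.Ici a) (Set.Ici 1) := by
    intro lam hlam
    simp only [Set.mem_Ici] at *
    calc (1:ℝ) ≤ a * Real.exp (μ^2/2) / q := ha
      _ ≤ lam * Real.exp (μ^2/2) / q := by
          rw [mul_div_assoc, mul_div_assoc]
          exact mul_le_mul_of_nonneg_right hlam hE.le
  have h1 : ContinuousOn (fun lam => arcosh (lam * Real.exp (μ^2/2) / q)) (Set.Ici a) :=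
    continuousOn_arcosh.comp (Continuous.continuousOn (by continuity)) hmap
  have h2 : ContinuousOn (fun lam => Phi (-arcosh (lam * Real.exp (μ^2/2) / q) / |μ|))
      (Set.Ici a) :=
    Phi_continuous.comp_continuousOn ((h1.neg).div_const _)
  exact h2.const_smul (2/q) |>.congr (fun x _ => by simp [optWeight, smul_eq_mul])

include hq hμ in
lemma optWeight_tendsto_zero : Tendsto (fun lam => optWeight q μ lam) atTop (nhds 0) := by
  have hE : 0 < Real.exp (μ^2/2) / q := by positivity
  have h1 : Tendsto (fun lam => lam * Real.exp (μ^2/2) / q) atTop atTop := by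
    simp only [mul_div_assoc]
    exact Tendsto.atTop_mul_const hE tendsto_id
  have h2 : Tendsto (fun lam => arcosh (lam * Real.exp (μ^2/2) / q)) atTop atTop :=
    arcosh_tendsto_atTop.comp h1
  have h3 : Tendsto (fun lam => -arcosh (lam * Real.exp (μ^2/2) / q) / |μ|) atTop atBot := by
    apply Tendsto.atBot_div_const (abs_pos.2 hμ)
    exact tendsto_neg_atTop_atBot.comp h2
  have h4 : Tendsto (fun lam => Phi (-arcosh (lam * Real.exp (μ^2/2) / q) / |μ|))
      atTop (nhds 0) := Phi_tendsto_atBot.comp h3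
  have := h4.const_mul (2/q)
  rw [mul_zero] at this
  exact this.congr (fun x => rfl)
end Hlam

/-- Explicit optimal weights for two-sided Gaussian tests: with `m = min μᵢ²/2` and
`H(λ) = Σᵢ w(μᵢ; λ)`, if all `μᵢ ≠ 0` and `H(q e^{−m}) ≥ J`, then there is a unique
`λ ≥ q e^{−m}` with `H(λ) = J`, and the weights `wᵢ = w(μᵢ; λ)` lie in `[0, 1/q]`,
sum to `J`, and maximize the average two-sided power over all feasible weight vectors. -/
theorem stmt_9 (q : ℝ) (hq : q ∈ Set.Ioo (0 : ℝ) 1) (J : ℕ) (hJ : 1 ≤ J)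
    (μ : Fin J → ℝ) (hμ : ∀ i, μ i ≠ 0)
    (m : ℝ) (hm_le : ∀ i, m ≤ (μ i) ^ 2 / 2) (hm_eq : ∃ i, m = (μ i) ^ 2 / 2)
    (hH : (J : ℝ) ≤ ∑ i, optWeight q (μ i) (q * Real.exp (-m))) :
    (∃! lam : ℝ, q * Real.exp (-m) ≤ lam ∧ ∑ i, optWeight q (μ i) lam = J) ∧
    (∀ lam : ℝ, q * Real.exp (-m) ≤ lam → (∑ i, optWeight q (μ i) lam = J) →
      (∀ i, optWeight q (μ i) lam ∈ Set.Icc (0 : ℝ) (1 / q)) ∧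
      (∀ v : Fin J → ℝ, (∀ i, v i ∈ Set.Icc (0 : ℝ) (1 / q)) → (∑ i, v i = J) →
        ∑ i, twoSidedPower q (μ i) (v i) ≤
          ∑ i, twoSidedPower q (μ i) (optWeight q (μ i) lam))) := by
  obtain ⟨hq0, hq1⟩ := hq
  set a := q * Real.exp (-m) with ha
  have ha_pos : 0 < a := by positivity
  -- key: for each i and lam ≥ a, the "c" value is ≥ 1
  have hc_a : ∀ i, 1 ≤ a * Real.exp ((μ i)^2/2) / q := by
    intro i
    rw [ha]
    rw [show q * Real.exp (-m) * Real.exp ((μ i)^2/2) / q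
        = Real.exp (-m) * Real.exp ((μ i)^2/2) * (q / q) by ring,
      div_self hq0.ne', mul_one, ← Real.exp_add]
    rw [show (1:ℝ) = Real.exp 0 by simp]
    apply Real.exp_le_exp.2
    have := hm_le i
    linarith
  have hc_lam : ∀ i, ∀ lam, a ≤ lam → 1 ≤ lam * Real.exp ((μ i)^2/2) / q := by
    intro i lam hlam
    calc (1:ℝ) ≤ a * Real.exp ((μ i)^2/2) / q := hc_a i
      _ ≤ lam * Real.exp ((μ i)^2/2) / q := by
          rw [mul_div_assoc, mul_div_assoc]
          exact mul_le_mul_of_nonneg_right hlam (by positivity)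
  have hne : (Finset.univ : Finset (Fin J)).Nonempty := by
    rw [Finset.univ_nonempty_iff]
    exact Fin.pos_iff_nonempty.1 hJ
  -- strict antitonicity of H on Ici a
  have hH_anti : StrictAntiOn (fun lam => ∑ i, optWeight q (μ i) lam) (Set.Ici a) := by
    intro l1 h1 l2 h2 h12
    apply Finset.sum_lt_sum_of_nonempty hne
    intro i _
    exact optWeight_strictAntiOn hq0 (hμ i) (hc_a i) h1 h2 h12
  -- continuity of H on Ici a
  have hH_cont : ContinuousOn (fun lam => ∑ i, optWeight q (μ i) lam) (Set.Ici a) := by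
    apply continuousOn_finset_sum
    intro i _
    exact optWeight_continuousOn hq0 (hμ i) (hc_a i)
  -- H tends to 0
  have hH_tendsto : Tendsto (fun lam => ∑ i, optWeight q (μ i) lam) atTop (nhds 0) := by
    have : Tendsto (fun lam => ∑ i, optWeight q (μ i) lam) atTop
        (nhds (∑ i : Fin J, (0:ℝ))) :=
      tendsto_finset_sum _ (fun i _ => optWeight_tendsto_zero hq0 (hμ i))
    simpa using this
  constructor
  · -- existence and uniqueness
    obtain ⟨Λ, hΛa, hΛ⟩ : ∃ Λ, a ≤ Λ ∧ (∑ i, optWeight q (μ i) Λ) < J := by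
      have hev : ∀ᶠ lam in atTop, (∑ i, optWeight q (μ i) lam) < J := by
        apply hH_tendsto.eventually_lt_const
        have hJ' : (1:ℝ) ≤ (J:ℝ) := by exact_mod_cast hJ
        linarith
      obtain ⟨Λ, hΛ⟩ := (hev.and (eventually_ge_atTop a)).exists
      exact ⟨Λ, hΛ.2, hΛ.1⟩
    have hJm : (J:ℝ) ∈ Set.Icc (∑ i, optWeight q (μ i) Λ) (∑ i, optWeight q (μ i) a) :=
      ⟨hΛ.le, hH⟩
    obtain ⟨lam, hlam_mem, hlam_eq⟩ :=
      intermediate_value_Icc' hΛa (hH_cont.mono Set.Icc_subset_Ici_self) hJm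
    have hlam_eq' : ∑ i, optWeight q (μ i) lam = (J:ℝ) := hlam_eq
    refine ⟨lam, ⟨hlam_mem.1, hlam_eq'⟩, ?_⟩
    intro l hl
    rcases lt_trichotomy l lam with h | h | h
    · have h2 : ∑ i, optWeight q (μ i) lam < ∑ i, optWeight q (μ i) l :=
        hH_anti hl.1 hlam_mem.1 h
      rw [hl.2, hlam_eq'] at h2
      exact absurd h2 (lt_irrefl _)
    · exact h
    · have h2 : ∑ i, optWeight q (μ i) l < ∑ i, optWeight q (μ i) lam :=
        hH_anti hlam_mem.1 hl.1 h
      rw [hl.2, hlam_eq'] at h2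
      exact absurd h2 (lt_irrefl _)
  · -- optimality
    intro lam hlam hsum
    have hc : ∀ i, 1 ≤ lam * Real.exp ((μ i)^2/2) / q := fun i => hc_lam i lam hlam
    constructor
    · intro i
      exact optWeight_mem hq0 (hμ i) (hc i)
    · intro v hv hvsum
      have hkey : ∀ i ∈ Finset.univ, twoSidedPower q (μ i) (v i) - lam * v i ≤
          twoSidedPower q (μ i) (optWeight q (μ i) lam) - lam * optWeight q (μ i) lam :=
        fun i _ => key_ineq hq0 (hμ i) (hc i) (hv i)
      have hsum2 := Finset.sum_le_sum hkey
      rw [Finset.sum_sub_distrib, Finset.sum_sub_distrib, ← Finset.mul_sum, ← Finset.mul_sum,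
        hvsum, hsum] at hsum2
      linarith
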